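/- For every real r > 1, the quantity (1+2r)^(r-1) / (2r-1)^r is strictly less than 1. -/

import Mathlib

theorem stmt_2 (r : ℝ) (hr : 1 < r) :
    (1 + 2 * r) ^ (r - 1) / (2 * r - 1) ^ r < 1 := by
  have h1 : (0:ℝ) < 1 + 2 * r := by linarith
  have h2 : (0:ℝ) < 2 * r - 1 := by linarith
  have h2' : (1:ℝ) < 2 * r - 1 := by linarith
  -- key log inequality: (r-1) * log(1+2r) < r * log(2r-1)
  have hratio : Real.log ((1 + 2 * r) / (2 * r - 1)) < 2 / (2 * r - 1) := by
    have hpos : (0:ℝ) < (1 + 2 * r) / (2 * r - 1) := div_pos h1 h2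
    have hne : (1 + 2 * r) / (2 * r - 1) ≠ 1 := by
      intro h
      rw [div_eq_one_iff_eq (ne_of_gt h2)] at h
      linarith
    have := Real.log_lt_sub_one_of_pos hpos hne
    have heq : (1 + 2 * r) / (2 * r - 1) - 1 = 2 / (2 * r - 1) := by
      field_simp; ring
    linarith [heq ▸ this]
  have hlow : (2 * r - 2) / (2 * r - 1) < Real.log (2 * r - 1) := by
    have hpos : (0:ℝ) < (2 * r - 1)⁻¹ := inv_pos.mpr h2
    have hne : ((2 * r - 1):ℝ)⁻¹ ≠ 1 := by
      intro h
      have : (2 * r - 1) = 1 := by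
        field_simp at h; linarith
      linarith
    have := Real.log_lt_sub_one_of_pos hpos hne
    rw [Real.log_inv] at this
    have h3 : Real.log (2 * r - 1) > 1 - (2 * r - 1)⁻¹ := by linarith
    have heq : 1 - (2 * r - 1)⁻¹ = (2 * r - 2) / (2 * r - 1) := by
      field_simp; ring
    linarith [heq ▸ h3]
  have hkey : (r - 1) * Real.log (1 + 2 * r) < r * Real.log (2 * r - 1) := by
    have hsplit : Real.log ((1 + 2 * r) / (2 * r - 1))
        = Real.log (1 + 2 * r) - Real.log (2 * r - 1) :=
      Real.log_div (ne_of_gt h1) (ne_of_gt h2)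
    have hr1 : (0:ℝ) < r - 1 := by linarith
    have := mul_lt_mul_of_pos_left hratio hr1
    rw [hsplit] at this
    have heq : (r - 1) * (2 / (2 * r - 1)) = (2 * r - 2) / (2 * r - 1) := by
      field_simp
    nlinarith [hlow]
  have hlt : (1 + 2 * r) ^ (r - 1) < (2 * r - 1) ^ r := by
    rw [Real.rpow_def_of_pos h1, Real.rpow_def_of_pos h2]
    exact Real.exp_lt_exp.mpr (by linarith [hkey])
  rw [div_lt_one (Real.rpow_pos_of_pos h2 r)]
  exact hlt
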